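/- Let C be a set of homeomorphisms of S^1. Then C has the convergence property (every infinite sequence of distinct elements of C has a subsequence converging uniformly on compact subsets of S^1 \ {b} to a constant a, for some points a, b ∈ S^1) if and only if C acts properly discontinuously on the space T of ordered triples of distinct points of S^1. -/

import Mathlib

open Set Metric Filter Topology Function
noncomputable section

/-- The circle, modeled as `ℝ/ℤ`. -/
abbrev C1 := AddCircle (1:ℝ)

/-- The embedding of the circle into `ℂ` as the unit circle. -/
def toC (x : C1) : ℂ := (AddCircle.toCircle x : ℂ)

/-- Two unordered pairs `{a,b}`, `{c,d}` of points of the circle are linked if `c` and `d`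
lie in different connected components of the complement of `{a,b}`. -/
def Linked (a b c d : C1) : Prop :=
  c ∈ ({a,b}ᶜ : Set C1) ∧ d ∈ ({a,b}ᶜ : Set C1) ∧
    connectedComponentIn ({a,b}ᶜ : Set C1) c ≠ connectedComponentIn ({a,b}ᶜ : Set C1) d

/-- A lamination on the circle: a closed (in the open Möbius band, i.e. among pairs of
distinct points) symmetric set of pairwise unlinked pairs of distinct points. -/
structure IsLamination (Λ : Set (C1 × C1)) : Prop where
  ne : ∀ p ∈ Λ, p.1 ≠ p.2
  symm : ∀ p ∈ Λ, (p.2, p.1) ∈ Λ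
  isClosed : ∀ p ∈ closure Λ, p.1 ≠ p.2 → p ∈ Λ
  unlinked : ∀ p ∈ Λ, ∀ q ∈ Λ, ¬ Linked p.1 p.2 q.1 q.2

/-- The set of endpoints of leaves of a lamination. -/
def Ends (Λ : Set (C1 × C1)) : Set C1 := {x | ∃ y, (x, y) ∈ Λ}

/-- The union of the chords (in the unit disk of `ℂ`) realizing the leaves. -/
def chords (Λ : Set (C1 × C1)) : Set ℂ := ⋃ p ∈ Λ, segment ℝ (toC p.1) (toC p.2)

/-- A gap of a lamination: the closure of a connected component of the complement of the
union of the chords in the open unit disk. -/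
def IsGap (Λ : Set (C1 × C1)) (P : Set ℂ) : Prop :=
  ∃ x ∈ ball (0:ℂ) 1 \ chords Λ,
    P = closure (connectedComponentIn (ball (0:ℂ) 1 \ chords Λ) x)

/-- A lamination is very-full if every gap is a finite-sided ideal polygon, i.e. the convex
hull of at least three points of the circle. -/
def VeryFull (Λ : Set (C1 × C1)) : Prop :=
  IsLamination Λ ∧ ∀ P, IsGap Λ P →
    ∃ F : Finset C1, 3 ≤ F.card ∧ P = convexHull ℝ (toC '' (F : Set C1))

/-- An orientation-preserving circle homeomorphism: one admitting a monotone lift. -/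
def OrientationPreserving (f : C1 ≃ₜ C1) : Prop :=
  ∃ F : ℝ → ℝ, Monotone F ∧ ∀ x : ℝ, f (x : C1) = ((F x : ℝ) : C1)

/-- A subgroup of the homeomorphism group of the circle, as a set of homeomorphisms. -/
def IsHomeoGroup (G : Set (C1 ≃ₜ C1)) : Prop :=
  Homeomorph.refl C1 ∈ G ∧ (∀ g ∈ G, g.symm ∈ G) ∧ ∀ g ∈ G, ∀ h ∈ G, g.trans h ∈ G

/-- A lamination is invariant under a set of homeomorphisms. -/
def Invariant (G : Set (C1 ≃ₜ C1)) (Λ : Set (C1 × C1)) : Prop :=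
  ∀ g ∈ G, ∀ p ∈ Λ, (g p.1, g p.2) ∈ Λ

/-- Invariance under a single homeomorphism. -/
def InvariantUnder (g : C1 ≃ₜ C1) (Λ : Set (C1 × C1)) : Prop :=
  ∀ p ∈ Λ, (g p.1, g p.2) ∈ Λ

/-- A parabolic homeomorphism: exactly one fixed point. -/
def IsParabolic (g : C1 ≃ₜ C1) : Prop := ∃ x, fixedPoints ⇑g = {x}

/-- The cusp points of a group of circle homeomorphisms: fixed points of parabolics. -/
def CuspPoints (G : Set (C1 ≃ₜ C1)) : Set C1 :=
  {x | ∃ g ∈ G, fixedPoints ⇑g = {x}}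

/-- A rainbow at `p` for a lamination: a sequence of leaves each separating `p` from the
rest of the circle, with the arcs they cut off shrinking down to `p`. -/
def Rainbow (Λ : Set (C1 × C1)) (p : C1) : Prop :=
  ∃ l : ℕ → C1 × C1, (∀ i, l i ∈ Λ) ∧ (∀ i, (l i).1 ≠ p ∧ (l i).2 ≠ p) ∧
    Tendsto (fun i => (l i).1) atTop (nhds p) ∧
    Tendsto (fun i => (l i).2) atTop (nhds p) ∧
    ∀ U ∈ nhds p, ∀ᶠ i in atTop,
      connectedComponentIn ({(l i).1, (l i).2}ᶜ : Set C1) p ⊆ U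

/-- A pants-like collection of three very-full invariant laminations: pairwise transverse,
and endpoint sets pairwise meeting exactly in the cusp points of the group. -/
def PantsLike3 (G : Set (C1 ≃ₜ C1)) (Λ₁ Λ₂ Λ₃ : Set (C1 × C1)) : Prop :=
  VeryFull Λ₁ ∧ VeryFull Λ₂ ∧ VeryFull Λ₃ ∧
  Invariant G Λ₁ ∧ Invariant G Λ₂ ∧ Invariant G Λ₃ ∧
  Λ₁ ∩ Λ₂ = ∅ ∧ Λ₁ ∩ Λ₃ = ∅ ∧ Λ₂ ∩ Λ₃ = ∅ ∧
  Ends Λ₁ ∩ Ends Λ₂ = CuspPoints G ∧ Ends Λ₁ ∩ Ends Λ₃ = CuspPoints G ∧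
  Ends Λ₂ ∩ Ends Λ₃ = CuspPoints G

/-- A pants-like collection of two very-full invariant laminations. -/
def PantsLike2 (G : Set (C1 ≃ₜ C1)) (Λ₁ Λ₂ : Set (C1 × C1)) : Prop :=
  VeryFull Λ₁ ∧ VeryFull Λ₂ ∧ Invariant G Λ₁ ∧ Invariant G Λ₂ ∧
  Λ₁ ∩ Λ₂ = ∅ ∧ Ends Λ₁ ∩ Ends Λ₂ = CuspPoints G

/-- An attracting fixed point: some neighborhood is attracted to it under forward iteration. -/
def AttractingFixedPt (g : C1 ≃ₜ C1) (x : C1) : Prop :=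
  g x = x ∧ ∃ U ∈ nhds x, ∀ y ∈ U, Tendsto (fun n => (⇑g)^[n] y) atTop (nhds x)

/-- A repelling fixed point: attracting for the inverse. -/
def RepellingFixedPt (g : C1 ≃ₜ C1) (x : C1) : Prop :=
  g x = x ∧ ∃ U ∈ nhds x, ∀ y ∈ U, Tendsto (fun n => (⇑g.symm)^[n] y) atTop (nhds x)

/-- The space of ordered triples of pairwise distinct points of the circle. -/
def TripleSpace : Set (C1 × C1 × C1) := {t | t.1 ≠ t.2.1 ∧ t.1 ≠ t.2.2 ∧ t.2.1 ≠ t.2.2}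

/-- The diagonal action of a homeomorphism on triples. -/
def actT (g : C1 ≃ₜ C1) (t : C1 × C1 × C1) : C1 × C1 × C1 := (g t.1, g t.2.1, g t.2.2)

/-- The convergence property for a set of circle homeomorphisms. -/
def ConvergenceProperty (C : Set (C1 ≃ₜ C1)) : Prop :=
  ∀ g : ℕ → C1 ≃ₜ C1, (∀ i, g i ∈ C) → Function.Injective g →
    ∃ a b : C1, ∃ φ : ℕ → ℕ, StrictMono φ ∧
      ∀ K : Set C1, IsCompact K → K ⊆ {b}ᶜ →
        TendstoUniformlyOn (fun n x => g (φ n) x) (fun _ => a) atTop K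

/-- Proper discontinuity of the action on the space of distinct triples. -/
def ProperlyDiscOnTriples (C : Set (C1 ≃ₜ C1)) : Prop :=
  ∀ K : Set (C1 × C1 × C1), K ⊆ TripleSpace → IsCompact K →
    {g ∈ C | (actT g '' K ∩ K).Nonempty}.Finite

instance : Infinite C1 := by
  have : Infinite (Set.Ico (0:ℝ) (0+1)) := by
    rw [Set.infinite_coe_iff]; exact Set.Ico_infinite (by norm_num)
  exact Infinite.of_injective _ (AddCircle.equivIco 1 0).symm.injective

lemma infinite_of_mem_hyper {s : Set ℕ} (h : s ∈ Filter.hyperfilter ℕ) : s.Infinite := by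
  by_contra hf
  exact (Filter.notMem_hyperfilter_of_finite (Set.not_infinite.mp hf)) h

/-- U-limit of a sequence in the circle. -/
def ulim (y : ℕ → C1) : C1 := ((Filter.hyperfilter ℕ).map y).lim

lemma tendsto_ulim (y : ℕ → C1) : Tendsto y (Filter.hyperfilter ℕ) (𝓝 (ulim y)) := by
  have := Ultrafilter.le_nhds_lim ((Filter.hyperfilter ℕ).map y)
  rwa [Ultrafilter.coe_map] at this

lemma ulim_eq {y : ℕ → C1} {c : C1} (h : Tendsto y (Filter.hyperfilter ℕ) (𝓝 c)) :
    ulim y = c := tendsto_nhds_unique (tendsto_ulim y) h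

lemma isOpen_tripleSpace : IsOpen TripleSpace := by
  have h1 : IsClosed {t : C1×C1×C1 | t.1 = t.2.1} :=
    isClosed_eq continuous_fst (continuous_fst.comp continuous_snd)
  have h2 : IsClosed {t : C1×C1×C1 | t.1 = t.2.2} :=
    isClosed_eq continuous_fst (continuous_snd.comp continuous_snd)
  have h3 : IsClosed {t : C1×C1×C1 | t.2.1 = t.2.2} :=
    isClosed_eq (continuous_fst.comp continuous_snd) (continuous_snd.comp continuous_snd)
  have he : TripleSpace = ({t : C1×C1×C1 | t.1 = t.2.1} ∪
      ({t : C1×C1×C1 | t.1 = t.2.2} ∪ {t : C1×C1×C1 | t.2.1 = t.2.2}))ᶜ := by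
    ext t; simp [TripleSpace, not_or]
  rw [he]
  exact ((h1.union (h2.union h3))).isOpen_compl

/-- The core lemma: three sequences with pairwise distinct U-limits whose images under
`g n` have pairwise distinct U-limits contradict proper discontinuity. -/
lemma core {C : Set (C1 ≃ₜ C1)} (hPD : ProperlyDiscOnTriples C)
    {g : ℕ → C1 ≃ₜ C1} (hgC : ∀ i, g i ∈ C) (hinj : Function.Injective g)
    {y₁ y₂ y₃ : ℕ → C1} {x₁ x₂ x₃ c₁ c₂ c₃ : C1}
    (hx12 : x₁ ≠ x₂) (hx13 : x₁ ≠ x₃) (hx23 : x₂ ≠ x₃)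
    (hc12 : c₁ ≠ c₂) (hc13 : c₁ ≠ c₃) (hc23 : c₂ ≠ c₃)
    (h1 : Tendsto y₁ (Filter.hyperfilter ℕ) (𝓝 x₁))
    (h2 : Tendsto y₂ (Filter.hyperfilter ℕ) (𝓝 x₂))
    (h3 : Tendsto y₃ (Filter.hyperfilter ℕ) (𝓝 x₃))
    (i1 : Tendsto (fun n => g n (y₁ n)) (Filter.hyperfilter ℕ) (𝓝 c₁))
    (i2 : Tendsto (fun n => g n (y₂ n)) (Filter.hyperfilter ℕ) (𝓝 c₂))
    (i3 : Tendsto (fun n => g n (y₃ n)) (Filter.hyperfilter ℕ) (𝓝 c₃)) : False := by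
  set t : C1 × C1 × C1 := (x₁, x₂, x₃) with ht
  set s : C1 × C1 × C1 := (c₁, c₂, c₃) with hs
  have htT : t ∈ TripleSpace := ⟨hx12, hx13, hx23⟩
  have hsT : s ∈ TripleSpace := ⟨hc12, hc13, hc23⟩
  obtain ⟨εt, hεt, hballt⟩ := Metric.isOpen_iff.mp isOpen_tripleSpace t htT
  obtain ⟨εs, hεs, hballs⟩ := Metric.isOpen_iff.mp isOpen_tripleSpace s hsT
  set K : Set (C1 × C1 × C1) := closedBall t (εt/2) ∪ closedBall s (εs/2) with hK
  have hKT : K ⊆ TripleSpace := by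
    apply Set.union_subset
    · exact (Metric.closedBall_subset_ball (by linarith)).trans hballt
    · exact (Metric.closedBall_subset_ball (by linarith)).trans hballs
  have hKc : IsCompact K :=
    (Metric.isClosed_closedBall.isCompact).union (Metric.isClosed_closedBall.isCompact)
  have hfin := hPD K hKT hKc
  set Y : ℕ → C1 × C1 × C1 := fun n => (y₁ n, y₂ n, y₃ n) with hY
  have hYt : Tendsto Y (Filter.hyperfilter ℕ) (𝓝 t) :=
    h1.prodMk_nhds (h2.prodMk_nhds h3)
  have hYi : Tendsto (fun n => actT (g n) (Y n)) (Filter.hyperfilter ℕ) (𝓝 s) :=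
    i1.prodMk_nhds (i2.prodMk_nhds i3)
  have hA : {n | Y n ∈ ball t (εt/2) ∧ actT (g n) (Y n) ∈ ball s (εs/2)} ∈
      Filter.hyperfilter ℕ := by
    have e1 : {n | Y n ∈ ball t (εt/2)} ∈ Filter.hyperfilter ℕ :=
      Filter.mem_map.mp (hYt (Metric.ball_mem_nhds t (by linarith)))
    have e2 : {n | actT (g n) (Y n) ∈ ball s (εs/2)} ∈ Filter.hyperfilter ℕ :=
      Filter.mem_map.mp (hYi (Metric.ball_mem_nhds s (by linarith)))
    exact Filter.inter_mem e1 e2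
  have hsub : g '' {n | Y n ∈ ball t (εt/2) ∧ actT (g n) (Y n) ∈ ball s (εs/2)} ⊆
      {h ∈ C | (actT h '' K ∩ K).Nonempty} := by
    rintro - ⟨n, ⟨hn1, hn2⟩, rfl⟩
    refine ⟨hgC n, actT (g n) (Y n), ⟨Y n, ?_, rfl⟩, ?_⟩
    · exact Or.inl (Metric.ball_subset_closedBall hn1)
    · exact Or.inr (Metric.ball_subset_closedBall hn2)
  exact ((infinite_of_mem_hyper hA).image hinj.injOn).mono hsub hfin

section Main
variable {C : Set (C1 ≃ₜ C1)} {g : ℕ → C1 ≃ₜ C1}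

/-- There is a point `b` whose inverse-limit fiber is infinite. -/
lemma exists_infinite_fiber (hPD : ProperlyDiscOnTriples C)
    (hgC : ∀ i, g i ∈ C) (hinj : Function.Injective g) :
    ∃ b : C1, {v : C1 | ulim (fun n => (g n).symm v) = b}.Infinite := by
  classical
  set f' : C1 → C1 := fun v => ulim (fun n => (g n).symm v) with hf'
  have hcore3 : ∀ v₁ v₂ v₃ : C1, f' v₁ ≠ f' v₂ → f' v₁ ≠ f' v₃ → f' v₂ ≠ f' v₃ → False := by
    intro v₁ v₂ v₃ h12 h13 h23
    have hv12 : v₁ ≠ v₂ := fun h => h12 (by rw [h])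
    have hv13 : v₁ ≠ v₃ := fun h => h13 (by rw [h])
    have hv23 : v₂ ≠ v₃ := fun h => h23 (by rw [h])
    refine core hPD hgC hinj h12 h13 h23 hv12 hv13 hv23
      (tendsto_ulim _) (tendsto_ulim _) (tendsto_ulim _) ?_ ?_ ?_
    · simpa using tendsto_const_nhds (x := v₁) (f := (Filter.hyperfilter ℕ : Filter ℕ))
    · simpa using tendsto_const_nhds (x := v₂) (f := (Filter.hyperfilter ℕ : Filter ℕ))
    · simpa using tendsto_const_nhds (x := v₃) (f := (Filter.hyperfilter ℕ : Filter ℕ))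
  by_cases hex : ∃ v w : C1, f' v ≠ f' w
  · obtain ⟨v, w, hvw⟩ := hex
    have hcover : (Set.univ : Set C1) ⊆ f' ⁻¹' {f' v} ∪ f' ⁻¹' {f' w} := by
      intro z _
      by_contra hz
      simp only [Set.mem_union, Set.mem_preimage, Set.mem_singleton_iff, not_or] at hz
      exact hcore3 z v w hz.1 hz.2 hvw
    have : (f' ⁻¹' {f' v}).Infinite ∨ (f' ⁻¹' {f' w}).Infinite := by
      by_contra hno
      push_neg at hno
      exact Set.infinite_univ ((hno.1.union hno.2).subset hcover)
    rcases this with h | h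
    · exact ⟨f' v, h⟩
    · exact ⟨f' w, h⟩
  · push_neg at hex
    refine ⟨f' 0, ?_⟩
    have : {v : C1 | f' v = f' 0} = Set.univ := by
      ext v; simp [hex v 0]
    rw [this]; exact Set.infinite_univ


/-- All cluster values (along the hyperfilter) at points other than `b` agree. -/
lemma cluster_rigid (hPD : ProperlyDiscOnTriples C)
    (hgC : ∀ i, g i ∈ C) (hinj : Function.Injective g)
    {b : C1} (hb : {v : C1 | ulim (fun n => (g n).symm v) = b}.Infinite)
    {x₁ x₂ c₁ c₂ : C1} {y₁ y₂ : ℕ → C1}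
    (hx1b : x₁ ≠ b) (hx2b : x₂ ≠ b) (h12 : x₁ ≠ x₂)
    (hy1 : Tendsto y₁ (Filter.hyperfilter ℕ) (𝓝 x₁))
    (hy2 : Tendsto y₂ (Filter.hyperfilter ℕ) (𝓝 x₂))
    (hi1 : Tendsto (fun n => g n (y₁ n)) (Filter.hyperfilter ℕ) (𝓝 c₁))
    (hi2 : Tendsto (fun n => g n (y₂ n)) (Filter.hyperfilter ℕ) (𝓝 c₂)) :
    c₁ = c₂ := by
  by_contra hne
  obtain ⟨v, hv, hv12⟩ := (hb.diff ((Set.finite_singleton c₂).insert c₁)).nonempty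
  simp only [Set.mem_setOf_eq] at hv
  simp only [Set.mem_insert_iff, Set.mem_singleton_iff, not_or] at hv12
  have hvc1 : v ≠ c₁ := hv12.1
  have hvc2 : v ≠ c₂ := hv12.2
  refine core hPD hgC hinj (y₁ := fun n => (g n).symm v) (y₂ := y₁) (y₃ := y₂)
    (x₁ := b) (x₂ := x₁) (x₃ := x₂) (c₁ := v) (c₂ := c₁) (c₃ := c₂)
    (Ne.symm hx1b) (Ne.symm hx2b) h12 hvc1 hvc2 hne ?_ hy1 hy2 ?_ hi1 hi2
  · rw [← hv]; exact tendsto_ulim _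
  · simpa using tendsto_const_nhds (x := v) (f := (Filter.hyperfilter ℕ : Filter ℕ))

lemma pd_to_conv {C : Set (C1 ≃ₜ C1)} (hPD : ProperlyDiscOnTriples C) :
    ConvergenceProperty C := by
  classical
  intro g hgC hinj
  obtain ⟨b, hb⟩ := exists_infinite_fiber hPD hgC hinj
  obtain ⟨x₀, hx₀⟩ := exists_ne b
  set a := ulim (fun n => g n x₀) with ha
  have hta : Tendsto (fun n => g n x₀) (Filter.hyperfilter ℕ) (𝓝 a) := tendsto_ulim _
  -- every cluster value at a point different from b equals a
  have key : ∀ (x : C1), x ≠ b → ∀ (y : ℕ → C1) (c : C1),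
      Tendsto y (Filter.hyperfilter ℕ) (𝓝 x) →
      Tendsto (fun n => g n (y n)) (Filter.hyperfilter ℕ) (𝓝 c) → c = a := by
    intro x hxb y c hy hc
    by_cases hx : x = x₀
    · obtain ⟨x₁, hx₁⟩ := (((Set.finite_singleton b).insert x₀).infinite_compl).nonempty
      simp only [Set.mem_compl_iff, Set.mem_insert_iff, Set.mem_singleton_iff, not_or] at hx₁
      have e1 : c = ulim (fun n => g n x₁) :=
        cluster_rigid hPD hgC hinj hb hxb hx₁.2 (by rw [hx]; exact Ne.symm hx₁.1)
          hy tendsto_const_nhds hc (tendsto_ulim _)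
      have e2 : a = ulim (fun n => g n x₁) :=
        cluster_rigid hPD hgC hinj hb hx₀ hx₁.2 (Ne.symm hx₁.1)
          tendsto_const_nhds tendsto_const_nhds hta (tendsto_ulim _)
      rw [e1, ← e2]
    · exact cluster_rigid hPD hgC hinj hb hxb hx₀ hx hy tendsto_const_nhds hc hta
  -- local uniform convergence to `a` near any point different from `b`
  have LL : ∀ x : C1, x ≠ b → ∀ ε : ℝ, 0 < ε →
      ∃ N ∈ 𝓝 x, {n | ∀ y ∈ N, dist (g n y) a < ε} ∈ Filter.hyperfilter ℕ := by
    intro x hxb ε hε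
    by_contra hcon
    push_neg at hcon
    set A : ℕ → Set ℕ := fun k => {n | ∃ y ∈ ball x (1/(k+1:ℝ)), ε ≤ dist (g n y) a} with hAdef
    have hA : ∀ k : ℕ, A k ∈ Filter.hyperfilter ℕ := by
      intro k
      have hpos : (0:ℝ) < 1/(k+1:ℝ) := by positivity
      have h1 := hcon (ball x (1/(k+1:ℝ))) (Metric.ball_mem_nhds x hpos)
      have h2 : {n | ∀ y ∈ ball x (1/(k+1:ℝ)), dist (g n y) a < ε}ᶜ ∈ Filter.hyperfilter ℕ :=
        Ultrafilter.compl_mem_iff_notMem.2 h1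
      have he : {n | ∀ y ∈ ball x (1/(k+1:ℝ)), dist (g n y) a < ε}ᶜ = A k := by
        ext n
        simp only [hAdef, Set.mem_compl_iff, Set.mem_setOf_eq, not_forall, not_lt]
        constructor
        · rintro ⟨y, hy, hd⟩; exact ⟨y, hy, hd⟩
        · rintro ⟨y, hy, hd⟩; exact ⟨y, hy, hd⟩
      rwa [he] at h2
    have hmono : ∀ j k : ℕ, j ≤ k → A k ⊆ A j := by
      rintro j k hjk n ⟨y, hy, hd⟩
      refine ⟨y, ?_, hd⟩
      refine Metric.ball_subset_ball ?_ hy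
      apply one_div_le_one_div_of_le (by positivity)
      exact_mod_cast Nat.succ_le_succ hjk
    have hwit : ∀ k n : ℕ, ∃ y : C1,
        n ∈ A k → y ∈ ball x (1/(k+1:ℝ)) ∧ ε ≤ dist (g n y) a := by
      intro k n
      by_cases h : n ∈ A k
      · obtain ⟨y, h1, h2⟩ := h; exact ⟨y, fun _ => ⟨h1, h2⟩⟩
      · exact ⟨x, fun hn => absurd hn h⟩
    choose w hw using hwit
    set j : ℕ → ℕ := fun n => Nat.findGreatest (fun k => n ∈ A k) n with hjdef
    set y : ℕ → C1 := fun n => w (j n) n with hydef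
    have hy_spec : ∀ n, n ∈ A 0 → y n ∈ ball x (1/(j n+1:ℝ)) ∧ ε ≤ dist (g n (y n)) a := by
      intro n hn
      have : n ∈ A (j n) := Nat.findGreatest_spec (P := fun k => n ∈ A k) (Nat.zero_le n) hn
      exact hw (j n) n this
    have hyx : Tendsto y (Filter.hyperfilter ℕ) (𝓝 x) := by
      rw [Metric.tendsto_nhds]
      intro δ hδ
      obtain ⟨k, hk⟩ := exists_nat_one_div_lt hδ
      have hck : {n : ℕ | k ≤ n} ∈ Filter.hyperfilter ℕ := by
        apply Filter.mem_hyperfilter_of_finite_compl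
        have : {n : ℕ | k ≤ n}ᶜ = Set.Iio k := by ext n; simp [Set.mem_Iio, not_le]
        rw [this]; exact Set.finite_Iio k
      filter_upwards [hA k, hck] with n hnA hnk
      have hn0 : n ∈ A 0 := hmono 0 k (Nat.zero_le k) hnA
      have hjk : k ≤ j n := Nat.le_findGreatest hnk hnA
      have h1 := (hy_spec n hn0).1
      have h2 : (1:ℝ)/(j n+1:ℝ) ≤ 1/(k+1:ℝ) := by
        apply one_div_le_one_div_of_le (by positivity)
        exact_mod_cast Nat.succ_le_succ hjk
      calc dist (y n) x < 1/(j n+1:ℝ) := Metric.mem_ball.mp h1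
        _ ≤ 1/(k+1:ℝ) := h2
        _ < δ := hk
    set c := ulim (fun n => g n (y n)) with hcdef
    have hc : Tendsto (fun n => g n (y n)) (Filter.hyperfilter ℕ) (𝓝 c) := tendsto_ulim _
    have hce : ε ≤ dist c a := by
      have hcl : IsClosed {z : C1 | ε ≤ dist z a} :=
        isClosed_le continuous_const (continuous_id.dist continuous_const)
      have hev : ∀ᶠ n in (Filter.hyperfilter ℕ : Filter ℕ), g n (y n) ∈ {z | ε ≤ dist z a} := by
        filter_upwards [hA 0] with n hn
        exact (hy_spec n hn).2
      exact hcl.mem_of_tendsto hc hev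
    rw [key x hxb y c hyx hc] at hce
    simp only [dist_self] at hce
    linarith
  -- uniform smallness on compact subsets of the complement of b, along the ultrafilter
  have CU : ∀ (K : Set C1), IsCompact K → K ⊆ {b}ᶜ → ∀ ε : ℝ, 0 < ε →
      {n | ∀ x ∈ K, dist (g n x) a < ε} ∈ Filter.hyperfilter ℕ := by
    intro K hK hKb ε hε
    have hN : ∀ x ∈ K, ∃ N, N ∈ 𝓝 x ∧ {n | ∀ y ∈ N, dist (g n y) a < ε} ∈ Filter.hyperfilter ℕ := by
      intro x hx
      obtain ⟨N, h1, h2⟩ := LL x (hKb hx) ε hε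
      exact ⟨N, h1, h2⟩
    choose! N hN1 hN2 using hN
    obtain ⟨t, htK, hcov⟩ := hK.elim_nhds_subcover N hN1
    have hint : (⋂ x ∈ t, {n | ∀ y ∈ N x, dist (g n y) a < ε}) ∈ Filter.hyperfilter ℕ :=
      (Filter.biInter_finset_mem t).mpr (fun i hi => hN2 i (htK i hi))
    refine Filter.mem_of_superset hint ?_
    intro n hn x hx
    obtain ⟨xi, hxi, hxNi⟩ := Set.mem_iUnion₂.mp (hcov hx)
    have := (Set.mem_iInter₂.mp hn) xi hxi
    exact this x hxNi
  -- the nested sets from which the subsequence is extracted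
  set S : ℕ → Set ℕ := fun k =>
    {n | ∀ x : C1, 1/(k+1:ℝ) ≤ dist x b → dist (g n x) a < 1/(k+1:ℝ)} with hSdef
  have hS : ∀ k, S k ∈ Filter.hyperfilter ℕ := by
    intro k
    have hpos : (0:ℝ) < 1/(k+1:ℝ) := by positivity
    have hcl : IsClosed {x : C1 | 1/(k+1:ℝ) ≤ dist x b} :=
      isClosed_le continuous_const (continuous_id.dist continuous_const)
    have hsub : {x : C1 | 1/(k+1:ℝ) ≤ dist x b} ⊆ {b}ᶜ := by
      intro x hx
      simp only [Set.mem_setOf_eq] at hx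
      simp only [Set.mem_compl_iff, Set.mem_singleton_iff]
      intro hxe
      rw [hxe, dist_self] at hx
      linarith
    have := CU _ hcl.isCompact hsub (1/(k+1:ℝ)) hpos
    filter_upwards [this] with n hn x hx
    exact hn x hx
  set T : ℕ → Set ℕ := fun k => ⋂ i ∈ Finset.range (k+1), S i with hTdef
  have hT : ∀ k, T k ∈ Filter.hyperfilter ℕ := by
    intro k
    have : T k = ⋂ i ∈ Finset.range (k+1), S i := rfl
    rw [this]
    exact (Filter.biInter_finset_mem _).mpr (fun i _ => hS i)
  have hTinf : ∀ k, (T k).Infinite := fun k => infinite_of_mem_hyper (hT k)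
  have hch : ∀ (m bd : ℕ), ∃ n, n ∈ T m ∧ bd < n := by
    intro m bd
    obtain ⟨n, hn1, hn2⟩ := (hTinf m).exists_gt bd
    exact ⟨n, hn1, hn2⟩
  set φ : ℕ → ℕ := fun k =>
    Nat.rec (Classical.choose (hch 0 0)) (fun k ih => Classical.choose (hch (k+1) ih)) k with hφdef
  have hφ_succ : ∀ k, φ (k+1) = Classical.choose (hch (k+1) (φ k)) := fun k => rfl
  have hφ_mem : ∀ k, φ k ∈ T k := by
    intro k
    cases k with
    | zero => exact (Classical.choose_spec (hch 0 0)).1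
    | succ k => rw [hφ_succ k]; exact (Classical.choose_spec (hch (k+1) (φ k))).1
  have hφ_mono : StrictMono φ := by
    apply strictMono_nat_of_lt_succ
    intro k
    rw [hφ_succ k]
    exact (Classical.choose_spec (hch (k+1) (φ k))).2
  refine ⟨a, b, φ, hφ_mono, ?_⟩
  intro K hK hKb
  rw [Metric.tendstoUniformlyOn_iff]
  intro ε hε
  rcases K.eq_empty_or_nonempty with hKe | hKne
  · filter_upwards with n x hx
    rw [hKe] at hx
    exact absurd hx (Set.notMem_empty x)
  · obtain ⟨z, hzK, hzmin⟩ := hK.exists_isMinOn hKne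
      ((continuous_id.dist continuous_const).continuousOn)
    have hzb : z ≠ b := hKb hzK
    have hd : 0 < dist z b := dist_pos.mpr hzb
    obtain ⟨m, hm⟩ := exists_nat_one_div_lt (lt_min hd hε)
    rw [Filter.eventually_atTop]
    refine ⟨m, fun k hk => ?_⟩
    intro x hx
    have h1 : (1:ℝ)/(k+1:ℝ) ≤ 1/(m+1:ℝ) := by
      apply one_div_le_one_div_of_le (by positivity)
      exact_mod_cast Nat.succ_le_succ hk
    have h2 : (1:ℝ)/(k+1:ℝ) ≤ dist x b := by
      calc (1:ℝ)/(k+1:ℝ) ≤ 1/(m+1:ℝ) := h1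
        _ ≤ dist z b := le_of_lt (lt_of_lt_of_le hm (min_le_left _ _))
        _ ≤ dist x b := hzmin hx
    have hmem : φ k ∈ S k := by
      have := hφ_mem k
      rw [hTdef] at this
      exact Set.mem_iInter₂.mp this k (Finset.self_mem_range_succ k)
    have h3 := hmem x h2
    rw [dist_comm]
    calc dist (g (φ k) x) a < 1/(k+1:ℝ) := h3
      _ ≤ 1/(m+1:ℝ) := h1
      _ < ε := lt_of_lt_of_le hm (min_le_right _ _)

lemma conv_to_pd {C : Set (C1 ≃ₜ C1)} (hConv : ConvergenceProperty C) :
    ProperlyDiscOnTriples C := by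
  classical
  intro K hKT hKc
  by_contra hfin
  have hinf : {h ∈ C | (actT h '' K ∩ K).Nonempty}.Infinite := hfin
  set e := hinf.natEmbedding with he
  set g : ℕ → C1 ≃ₜ C1 := fun n => (e n : C1 ≃ₜ C1) with hg
  have hgC : ∀ n, g n ∈ C := fun n => (e n).2.1
  have hginj : Function.Injective g := fun m n h => e.injective (Subtype.ext h)
  have hgne : ∀ n, (actT (g n) '' K ∩ K).Nonempty := fun n => (e n).2.2
  have hsel : ∀ n, ∃ t, t ∈ K ∧ actT (g n) t ∈ K := by
    intro n
    obtain ⟨z, hz1, hz2⟩ := hgne n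
    obtain ⟨t, htK, rfl⟩ := hz1
    exact ⟨t, htK, hz2⟩
  choose t htK htiK using hsel
  obtain ⟨a, b, φ, hφ, hunif⟩ := hConv g hgC hginj
  -- extract convergent subsequences of the triples and their images
  obtain ⟨tL, htLK, ψ₁, hψ₁, hc1⟩ := hKc.tendsto_subseq (x := fun n => t (φ n)) (fun n => htK _)
  obtain ⟨sL, hsLK, ψ₂, hψ₂, hc2⟩ := hKc.tendsto_subseq
    (x := fun n => actT (g (φ (ψ₁ n))) (t (φ (ψ₁ n)))) (fun n => htiK _)
  set ρ : ℕ → ℕ := ψ₁ ∘ ψ₂ with hρ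
  have hρmono : StrictMono ρ := hψ₁.comp hψ₂
  have hτ : Tendsto (fun k => t (φ (ρ k))) atTop (𝓝 tL) := hc1.comp hψ₂.tendsto_atTop
  have hσ : Tendsto (fun k => actT (g (φ (ρ k))) (t (φ (ρ k)))) atTop (𝓝 sL) := hc2
  -- the coordinate lemma
  have CL : ∀ (u : ℕ → C1) (uL wL : C1), uL ≠ b →
      Tendsto u atTop (𝓝 uL) →
      Tendsto (fun k => g (φ (ρ k)) (u k)) atTop (𝓝 wL) → wL = a := by
    intro u uL wL hub hu hw
    set D := dist uL b with hD
    have hD0 : 0 < D := dist_pos.mpr hub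
    set K₀ : Set C1 := closedBall uL (D/2) with hK₀
    have hK₀c : IsCompact K₀ := Metric.isClosed_closedBall.isCompact
    have hK₀b : K₀ ⊆ {b}ᶜ := by
      intro y hy
      simp only [Set.mem_compl_iff, Set.mem_singleton_iff]
      intro hyb
      rw [hyb] at hy
      have := Metric.mem_closedBall.mp hy
      rw [dist_comm] at this
      linarith
    have hU := hunif K₀ hK₀c hK₀b
    rw [Metric.tendstoUniformlyOn_iff] at hU
    have hgoal : Tendsto (fun k => g (φ (ρ k)) (u k)) atTop (𝓝 a) := by
      rw [Metric.tendsto_nhds]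
      intro ε hε
      have h1 : ∀ᶠ k in atTop, ∀ x ∈ K₀, dist a (g (φ (ρ k)) x) < ε :=
        hρmono.tendsto_atTop.eventually (hU ε hε)
      have h2 : ∀ᶠ k in atTop, u k ∈ K₀ :=
        hu (Metric.closedBall_mem_nhds uL (by linarith))
      filter_upwards [h1, h2] with k hk1 hk2
      rw [dist_comm]
      exact hk1 (u k) hk2
    exact tendsto_nhds_unique hw hgoal
  -- apply to coordinates
  have hTL : tL ∈ TripleSpace := hKT htLK
  have hSL : sL ∈ TripleSpace := hKT hsLK
  obtain ⟨ht12, ht13, ht23⟩ := hTL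
  obtain ⟨hs12, hs13, hs23⟩ := hSL
  have hco1 : Tendsto (fun k => (t (φ (ρ k))).1) atTop (𝓝 tL.1) :=
    (continuous_fst.tendsto tL).comp hτ
  have hco2 : Tendsto (fun k => (t (φ (ρ k))).2.1) atTop (𝓝 tL.2.1) :=
    ((continuous_fst.comp continuous_snd).tendsto tL).comp hτ
  have hco3 : Tendsto (fun k => (t (φ (ρ k))).2.2) atTop (𝓝 tL.2.2) :=
    ((continuous_snd.comp continuous_snd).tendsto tL).comp hτ
  have hico1 : Tendsto (fun k => g (φ (ρ k)) ((t (φ (ρ k))).1)) atTop (𝓝 sL.1) :=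
    (continuous_fst.tendsto sL).comp hσ
  have hico2 : Tendsto (fun k => g (φ (ρ k)) ((t (φ (ρ k))).2.1)) atTop (𝓝 sL.2.1) :=
    ((continuous_fst.comp continuous_snd).tendsto sL).comp hσ
  have hico3 : Tendsto (fun k => g (φ (ρ k)) ((t (φ (ρ k))).2.2)) atTop (𝓝 sL.2.2) :=
    ((continuous_snd.comp continuous_snd).tendsto sL).comp hσ
  by_cases h1b : tL.1 = b
  · have h2b : tL.2.1 ≠ b := fun h => ht12 (h1b.trans h.symm)
    have h3b : tL.2.2 ≠ b := fun h => ht13 (h1b.trans h.symm)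
    have e2 := CL _ _ _ h2b hco2 hico2
    have e3 := CL _ _ _ h3b hco3 hico3
    exact hs23 (e2.trans e3.symm)
  · by_cases h2b : tL.2.1 = b
    · have h3b : tL.2.2 ≠ b := fun h => ht23 (h2b.trans h.symm)
      have e1 := CL _ _ _ h1b hco1 hico1
      have e3 := CL _ _ _ h3b hco3 hico3
      exact hs13 (e1.trans e3.symm)
    · have e1 := CL _ _ _ h1b hco1 hico1
      have e2 := CL _ _ _ h2b hco2 hico2
      exact hs12 (e1.trans e2.symm)

theorem stmt_18 (C : Set (C1 ≃ₜ C1)) :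
    ConvergenceProperty C ↔ ProperlyDiscOnTriples C :=
  ⟨fun h => conv_to_pd h, fun h => pd_to_conv h⟩
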